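/- For each j ∈ {1,2,3} and on the domain ℝ × B, the pair of functions φ₁(τ,ξ) := e^τ, φ₂(τ,ξ) := 2e^τ and, separately, the pair φ₁(τ,ξ) := ξ^j, φ₂(τ,ξ) := 2ξ^j each solve the linearized system ∂_τ φ₁ = −ξ^k ∂_{ξ^k} φ₁ − φ₁ + φ₂ and ∂_τ φ₂ = ∂_{ξ^k}∂^{ξ_k} φ₁ − ξ^k ∂_{ξ^k} φ₂ − 2φ₂ + 6φ₁. Consequently (1,2) is an eigenfunction of the linearized generator with eigenvalue 1 and (ξ^j, 2ξ^j), j = 1,2,3, are eigenfunctions with eigenvalue 0. -/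
import Mathlib


noncomputable section

/-- Similarity coordinates space `ℝ × ℝ³` (points `(τ,ξ)`). -/
abbrev Spc : Type := ℝ × EuclideanSpace ℝ (Fin 3)

/-- Directional derivative in the direction `w`. -/
noncomputable def dirDeriv (w : Spc) (v : Spc → ℝ) (p : Spc) : ℝ := fderiv ℝ v p w

/-- Time direction `∂_τ`. -/
noncomputable def e0 : Spc := (1, 0)

/-- Spatial coordinate directions `∂_{ξ^j}`. -/
noncomputable def es (j : Fin 3) : Spc := (0, EuclideanSpace.single j 1)

/-- Spatial Laplacian `∂_{ξ^k}∂^{ξ_k}`. -/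
noncomputable def lap (v : Spc → ℝ) (p : Spc) : ℝ :=
  ∑ k : Fin 3, dirDeriv (es k) (dirDeriv (es k) v) p

/-- A pair `(φ₁,φ₂)` solves the linearized system
`∂_τφ₁ = -ξ^k∂_kφ₁ - φ₁ + φ₂`, `∂_τφ₂ = Δφ₁ - ξ^k∂_kφ₂ - 2φ₂ + 6φ₁` on `ℝ × B`. -/
def SolvesLin (φ₁ φ₂ : Spc → ℝ) : Prop :=
  ∀ p : Spc, ‖p.2‖ < 1 →
    dirDeriv e0 φ₁ p =
      -(∑ k : Fin 3, p.2 k * dirDeriv (es k) φ₁ p) - φ₁ p + φ₂ p ∧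
    dirDeriv e0 φ₂ p =
      lap φ₁ p - (∑ k : Fin 3, p.2 k * dirDeriv (es k) φ₂ p) - 2 * φ₂ p + 6 * φ₁ p

lemma fd_exp (p w : Spc) :
    fderiv ℝ (fun q : Spc => Real.exp q.1) p w = Real.exp p.1 * w.1 := by
  have h : HasFDerivAt (fun q : Spc => Real.exp q.1)
      (Real.exp p.1 • ContinuousLinearMap.fst ℝ ℝ (EuclideanSpace ℝ (Fin 3))) p :=
    (hasFDerivAt_fst).exp
  rw [h.fderiv]; simp [mul_comm]

lemma fd_cexp (c : ℝ) (p w : Spc) :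
    fderiv ℝ (fun q : Spc => c * Real.exp q.1) p w = c * (Real.exp p.1 * w.1) := by
  have h : HasFDerivAt (fun q : Spc => Real.exp q.1)
      (Real.exp p.1 • ContinuousLinearMap.fst ℝ ℝ (EuclideanSpace ℝ (Fin 3))) p :=
    (hasFDerivAt_fst).exp
  rw [(h.const_mul c).fderiv]; simp [mul_comm, mul_assoc]

def Lproj (j : Fin 3) : Spc →L[ℝ] ℝ :=
  (EuclideanSpace.proj j).comp (ContinuousLinearMap.snd ℝ ℝ (EuclideanSpace ℝ (Fin 3)))

lemma fd_proj (j : Fin 3) (p w : Spc) :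
    fderiv ℝ (fun q : Spc => q.2 j) p w = w.2 j := by
  have h : HasFDerivAt (fun q : Spc => q.2 j) (Lproj j) p := (Lproj j).hasFDerivAt
  rw [h.fderiv]; rfl

lemma fd_cproj (c : ℝ) (j : Fin 3) (p w : Spc) :
    fderiv ℝ (fun q : Spc => c * q.2 j) p w = c * w.2 j := by
  have h : HasFDerivAt (fun q : Spc => q.2 j) (Lproj j) p := (Lproj j).hasFDerivAt
  rw [(h.const_mul c).fderiv]; rfl

/-- The pairs `(e^τ, 2e^τ)` (eigenvalue `1`, from time translation) and
`(ξ^j, 2ξ^j)`, `j = 1,2,3` (eigenvalue `0`, from Lorentz boosts) solve the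
linearized system on `ℝ × B`. -/
theorem stmt16 :
    SolvesLin (fun q : Spc => Real.exp q.1) (fun q : Spc => 2 * Real.exp q.1) ∧
    ∀ j : Fin 3, SolvesLin (fun q : Spc => q.2 j) (fun q : Spc => 2 * q.2 j) := by
  constructor
  · intro p _
    have h1 : ∀ k : Fin 3, dirDeriv (es k) (fun q : Spc => Real.exp q.1) = fun _ => (0:ℝ) := by
      intro k; funext q
      show fderiv ℝ _ q (es k) = 0
      rw [fd_exp]; simp [es]
    have h2 : ∀ k : Fin 3, dirDeriv (es k) (fun q : Spc => 2 * Real.exp q.1) = fun _ => (0:ℝ) := by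
      intro k; funext q
      show fderiv ℝ _ q (es k) = 0
      rw [fd_cexp]; simp [es]
    have he1 : dirDeriv e0 (fun q : Spc => Real.exp q.1) p = Real.exp p.1 := by
      show fderiv ℝ _ p e0 = _; rw [fd_exp]; simp [e0]
    have he2 : dirDeriv e0 (fun q : Spc => 2 * Real.exp q.1) p = 2 * Real.exp p.1 := by
      show fderiv ℝ _ p e0 = _; rw [fd_cexp]; simp [e0]
    have hl : lap (fun q : Spc => Real.exp q.1) p = 0 := by
      simp only [lap, h1]; simp [dirDeriv]
    constructor
    · rw [he1]; simp only [h1]; simp; ring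
    · rw [he2, hl]; simp only [h2]; simp; ring
  · intro j p _
    have h1 : ∀ k : Fin 3, dirDeriv (es k) (fun q : Spc => q.2 j) =
        fun _ => (EuclideanSpace.single k 1 : EuclideanSpace ℝ (Fin 3)) j := by
      intro k; funext q
      show fderiv ℝ _ q (es k) = _
      rw [fd_proj]; rfl
    have h2 : ∀ k : Fin 3, dirDeriv (es k) (fun q : Spc => 2 * q.2 j) =
        fun _ => 2 * (EuclideanSpace.single k 1 : EuclideanSpace ℝ (Fin 3)) j := by
      intro k; funext q
      show fderiv ℝ _ q (es k) = _
      rw [fd_cproj]; rfl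
    have he1 : dirDeriv e0 (fun q : Spc => q.2 j) p = 0 := by
      show fderiv ℝ _ p e0 = _; rw [fd_proj]; simp [e0]
    have he2 : dirDeriv e0 (fun q : Spc => 2 * q.2 j) p = 0 := by
      show fderiv ℝ _ p e0 = _; rw [fd_cproj]; simp [e0]
    have hl : lap (fun q : Spc => q.2 j) p = 0 := by
      simp only [lap, h1]; simp [dirDeriv]
    constructor
    · rw [he1]; simp only [h1]
      simp [EuclideanSpace.single_apply, mul_ite, Finset.sum_ite_eq']
      ring
    · rw [he2, hl]; simp only [h2]
      simp [EuclideanSpace.single_apply, mul_ite, Finset.sum_ite_eq']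
      ring
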